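/- Let κ₁, κ₂ ∈ ℝ and let z₁, z₂ ∈ ℂ_{κ₂} satisfy |z₁|² + κ₁|z₂|² = 1. Suppose w : ℝ → ℂ_{κ₂} is differentiable at 0 and satisfies, for all t in a neighborhood of 0, the relation w(t)·(C_{κ₁}(t)·z₁ − κ₁·S_{κ₁}(t)·z̄₂) = C_{κ₁}(t)·z₂ + S_{κ₁}(t)·z̄₁ (so that w(t) is the projection to the base of the horizontal curve X(t) = (C_{κ₁}(t) + S_{κ₁}(t)j)(z₁ + z₂j) on S³_{κ₁,κ₂}). Then z₁²·w′(0) = 1 in ℂ_{κ₂}; in particular the horizontal lift of the spacetime Σ_{κ₁,κ₂} has derivative w′(0) = 1/z₁², from which the induced metric dw·dw̄/(1 + κ₁|w|²)² of constant curvature κ₁ on the space of events follows. -/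

import Mathlib

/-- Multiplication in the generalized complex numbers `ℂ_κ ≅ ℝ²`:
`(x,y)·(x',y') = (xx' - κyy', xy' + x'y)`. -/
def gcMul (κ : ℝ) (z w : ℝ × ℝ) : ℝ × ℝ :=
  (z.1 * w.1 - κ * z.2 * w.2, z.1 * w.2 + w.1 * z.2)

/-- Conjugation in `ℂ_κ`. -/
def gcConj (z : ℝ × ℝ) : ℝ × ℝ := (z.1, -z.2)

/-- The modulus-squared `|z|² = z z̄ = x² + κ y²` in `ℂ_κ`. -/
def gcNormSq (κ : ℝ) (z : ℝ × ℝ) : ℝ := z.1 ^ 2 + κ * z.2 ^ 2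

/-- The generalized cosine `C_κ`. -/
noncomputable def Ck (κ φ : ℝ) : ℝ :=
  if 0 < κ then Real.cos (Real.sqrt κ * φ)
  else if κ = 0 then 1
  else Real.cosh (Real.sqrt (-κ) * φ)

/-- The generalized sine `S_κ`. -/
noncomputable def Sk (κ φ : ℝ) : ℝ :=
  if 0 < κ then Real.sin (Real.sqrt κ * φ) / Real.sqrt κ
  else if κ = 0 then φ
  else Real.sinh (Real.sqrt (-κ) * φ) / Real.sqrt (-κ)

/-- If `|z₁|² + κ₁|z₂|² = 1` and `w : ℝ → ℂ_{κ₂}` is differentiable at `0` with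
`w(t)·(C_{κ₁}(t) z₁ - κ₁ S_{κ₁}(t) z̄₂) = C_{κ₁}(t) z₂ + S_{κ₁}(t) z̄₁` near `0`
(the projection to the base of the horizontal curve
`X(t) = (C_{κ₁}(t) + S_{κ₁}(t) j)(z₁ + z₂ j)` on `S³_{κ₁,κ₂}`), then `z₁² w'(0) = 1`
in `ℂ_{κ₂}`; from `w'(0) = 1/z₁²` the induced metric `dw dw̄/(1 + κ₁|w|²)²` of constant
curvature `κ₁` on the space of events follows. -/
theorem horizontal_lift_derivative (κ₁ κ₂ : ℝ) (z₁ z₂ : ℝ × ℝ)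
    (hz : gcNormSq κ₂ z₁ + κ₁ * gcNormSq κ₂ z₂ = 1)
    (w : ℝ → ℝ × ℝ) (w' : ℝ × ℝ) (hw : HasDerivAt w w' 0)
    (hrel : ∀ᶠ t in nhds (0 : ℝ),
      gcMul κ₂ (w t) (Ck κ₁ t • z₁ - (κ₁ * Sk κ₁ t) • gcConj z₂) =
        Ck κ₁ t • z₂ + Sk κ₁ t • gcConj z₁) :
    gcMul κ₂ (gcMul κ₂ z₁ z₁) w' = (1, 0) := by
  have hc : HasDerivAt (Ck κ₁) 0 0 := by
    unfold Ck
    split_ifs with h1 h2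
    · simpa using ((hasDerivAt_id (0:ℝ)).const_mul (Real.sqrt κ₁)).cos
    · exact hasDerivAt_const 0 1
    · simpa using ((hasDerivAt_id (0:ℝ)).const_mul (Real.sqrt (-κ₁))).cosh
  have hs : HasDerivAt (Sk κ₁) 1 0 := by
    unfold Sk
    split_ifs with h1 h2
    · have hk : Real.sqrt κ₁ ≠ 0 := ne_of_gt (Real.sqrt_pos.mpr h1)
      simpa [hk] using (((hasDerivAt_id (0:ℝ)).const_mul (Real.sqrt κ₁)).sin).div_const (Real.sqrt κ₁)
    · exact hasDerivAt_id' (0:ℝ)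
    · have hκ : 0 < -κ₁ := by
        rcases lt_trichotomy κ₁ 0 with h|h|h
        · linarith
        · exact absurd h h2
        · exact absurd h h1
      have hk : Real.sqrt (-κ₁) ≠ 0 := ne_of_gt (Real.sqrt_pos.mpr hκ)
      simpa [hk] using (((hasDerivAt_id (0:ℝ)).const_mul (Real.sqrt (-κ₁))).sinh).div_const (Real.sqrt (-κ₁))
  have c0 : Ck κ₁ 0 = 1 := by unfold Ck; split_ifs <;> simp
  have s0 : Sk κ₁ 0 = 0 := by unfold Sk; split_ifs <;> simp
  -- componentwise relations
  have hrel1 : (fun t => (w t).1 * (Ck κ₁ t * z₁.1 - κ₁ * Sk κ₁ t * z₂.1) -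
      κ₂ * ((w t).2 * (Ck κ₁ t * z₁.2 - κ₁ * Sk κ₁ t * (-z₂.2)))) =ᶠ[nhds (0:ℝ)]
      (fun t => Ck κ₁ t * z₂.1 + Sk κ₁ t * z₁.1) := by
    filter_upwards [hrel] with t ht
    have h1 := congrArg Prod.fst ht
    simp only [gcMul, gcConj, Prod.smul_fst, Prod.smul_snd, Prod.fst_sub, Prod.snd_sub,
      Prod.fst_add, Prod.snd_add, smul_eq_mul] at h1
    linear_combination h1
  have hrel2 : (fun t => (w t).1 * (Ck κ₁ t * z₁.2 - κ₁ * Sk κ₁ t * (-z₂.2)) +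
      (Ck κ₁ t * z₁.1 - κ₁ * Sk κ₁ t * z₂.1) * (w t).2) =ᶠ[nhds (0:ℝ)]
      (fun t => Ck κ₁ t * z₂.2 + Sk κ₁ t * (-z₁.2)) := by
    filter_upwards [hrel] with t ht
    have h2 := congrArg Prod.snd ht
    simp only [gcMul, gcConj, Prod.smul_fst, Prod.smul_snd, Prod.fst_sub, Prod.snd_sub,
      Prod.fst_add, Prod.snd_add, smul_eq_mul] at h2
    linear_combination h2
  -- value at 0
  have E1 : (w 0).1 * z₁.1 - κ₂ * (w 0).2 * z₁.2 = z₂.1 := by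
    have := hrel1.self_of_nhds
    simp only [c0, s0] at this
    linear_combination this
  have E2 : (w 0).1 * z₁.2 + z₁.1 * (w 0).2 = z₂.2 := by
    have := hrel2.self_of_nhds
    simp only [c0, s0] at this
    linear_combination this
  -- auxiliary factor derivatives
  have hA : HasDerivAt (fun t => Ck κ₁ t * z₁.1 - κ₁ * Sk κ₁ t * z₂.1)
      (0 * z₁.1 - κ₁ * 1 * z₂.1) 0 :=
    (hc.mul_const z₁.1).sub ((hs.const_mul κ₁).mul_const z₂.1)
  have hB : HasDerivAt (fun t => Ck κ₁ t * z₁.2 - κ₁ * Sk κ₁ t * (-z₂.2))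
      (0 * z₁.2 - κ₁ * 1 * (-z₂.2)) 0 :=
    (hc.mul_const z₁.2).sub ((hs.const_mul κ₁).mul_const (-z₂.2))
  have hw1 : HasDerivAt (fun t => (w t).1) w'.1 0 := hw.fst
  have hw2 : HasDerivAt (fun t => (w t).2) w'.2 0 := hw.snd
  -- derivatives of the two sides, first component
  have hL1 := (hw1.mul hA).sub ((hw2.mul hB).const_mul κ₂)
  have hR1 : HasDerivAt (fun t => Ck κ₁ t * z₂.1 + Sk κ₁ t * z₁.1)
      (0 * z₂.1 + 1 * z₁.1) 0 := (hc.mul_const z₂.1).add (hs.mul_const z₁.1)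
  have hL1' := hL1.congr_of_eventuallyEq hrel1.symm
  have D1 := hR1.unique hL1'
  -- second component
  have hL2 := (hw1.mul hB).add (hA.mul hw2)
  have hR2 : HasDerivAt (fun t => Ck κ₁ t * z₂.2 + Sk κ₁ t * (-z₁.2))
      (0 * z₂.2 + 1 * (-z₁.2)) 0 := (hc.mul_const z₂.2).add (hs.mul_const (-z₁.2))
  have hL2' := hL2.congr_of_eventuallyEq hrel2.symm
  have D2 := hR2.unique hL2'
  simp only [c0, s0] at D1 D2
  simp only [gcNormSq] at hz
  simp only [gcMul, Prod.mk.injEq]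
  constructor
  · linear_combination -z₁.1 * D1 + κ₂ * z₁.2 * D2 + κ₁ * z₂.1 * E1 + κ₁ * κ₂ * z₂.2 * E2 + hz
  · linear_combination -z₁.2 * D1 - z₁.1 * D2 + κ₁ * z₂.1 * E2 - κ₁ * z₂.2 * E1
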